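/- Define sequences by n₁ = k, l₋₁ = l₀ = 0, n_{i+1} = k·⌊(n_i + l_{i−2})/k'⌋ for i ≥ 1, and l_i = (n_i + l_{i−2}) mod k' for i ≥ 1, where 1 ≤ k' < k are integers. Then n_i = Θ((k/k')^i); in particular n_i ≥ (k/k')^{i−1} · k' for all i ≥ 1 (for k ≥ 2k' this simplifies), and n_i ≤ k·(k/k')^{i−1} · C for a constant C depending only on k/k'. -/

import Mathlib

/-- Total "mass" in the last three layers of the construction. -/
def auxM13 (n l : ℕ → ℕ) (i : ℕ) : ℝ := (n i : ℝ) + (l (i - 1) : ℝ) + (l (i - 2) : ℝ)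

set_option maxHeartbeats 1000000 in
/-- Layer-size recurrences of the lower-bound construction: `n₁ = k`,
`l₋₁ = l₀ = 0`, `n_{i+1} = k⌊(n_i + l_{i-2})/k'⌋`, `l_i = (n_i + l_{i-2}) mod k'`
(with truncated subtraction encoding `l_{-1} = l_0 = 0`).  Then
`(k/k')(n_i + l_{i-2}) - k ≤ n_{i+1} ≤ (k/k')(n_i + l_{i-2})`, `l_i < k'`, and
`n_i = Θ((k/k')^i)`. -/
theorem stmt13 (k k' : ℕ) (hk' : 1 ≤ k') (hkk : k' < k)
    (n l : ℕ → ℕ)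
    (hn1 : n 1 = k) (hl0 : l 0 = 0)
    (hn : ∀ i, 1 ≤ i → n (i + 1) = k * ((n i + l (i - 2)) / k'))
    (hl : ∀ i, 1 ≤ i → l i = (n i + l (i - 2)) % k') :
    (∀ i, 1 ≤ i →
      (k : ℝ) / k' * ((n i + l (i - 2) : ℕ) : ℝ) - k ≤ (n (i + 1) : ℝ) ∧
      (n (i + 1) : ℝ) ≤ (k : ℝ) / k' * ((n i + l (i - 2) : ℕ) : ℝ) ∧
      l i < k') ∧
    ∃ c₁ c₂ : ℝ, 0 < c₁ ∧ 0 < c₂ ∧ ∀ i, 1 ≤ i →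
      c₁ * ((k : ℝ) / k') ^ i ≤ (n i : ℝ) ∧
      (n i : ℝ) ≤ c₂ * ((k : ℝ) / k') ^ i := by
  have hk'0 : 0 < k' := hk'
  have hk0 : 0 < k := hk'0.trans hkk
  have hk'R : (0:ℝ) < k' := by exact_mod_cast hk'0
  have hkR : (0:ℝ) < k := by exact_mod_cast hk0
  have hk'ne : (k':ℝ) ≠ 0 := ne_of_gt hk'R
  have hkk'R : (k':ℝ) < k := by exact_mod_cast hkk
  have hsub : (0:ℝ) < (k:ℝ) - k' := by linarith
  have hsubne : (k:ℝ) - k' ≠ 0 := ne_of_gt hsub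
  set r : ℝ := (k:ℝ)/k' with hr
  have hr1 : 1 < r := by rw [hr, lt_div_iff₀ hk'R]; linarith
  have hr0 : 0 < r := lt_trans one_pos hr1
  have hrk : r * k' = k := by rw [hr]; field_simp
  -- all leftovers are < k'
  have hlb : ∀ j, l j < k' := by
    intro j
    match j with
    | 0 => simpa [hl0] using hk'0
    | (m+1) =>
      rw [hl (m+1) (Nat.succ_le_succ (Nat.zero_le m))]
      exact Nat.mod_lt _ hk'0
  -- Part 1
  have part1 : ∀ i, 1 ≤ i →
      (k : ℝ) / k' * ((n i + l (i - 2) : ℕ) : ℝ) - k ≤ (n (i + 1) : ℝ) ∧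
      (n (i + 1) : ℝ) ≤ (k : ℝ) / k' * ((n i + l (i - 2) : ℕ) : ℝ) ∧
      l i < k' := by
    intro i hi
    have hrec := hn i hi
    set m := n i + l (i - 2) with hm
    have hdm := Nat.div_add_mod m k'
    have hmod := Nat.mod_lt m hk'0
    have h1 : (m:ℝ) < (k':ℝ) * ((m / k' : ℕ):ℝ) + k' := by
      have : m < k' * (m / k') + k' := by omega
      exact_mod_cast this
    have h2 : (k':ℝ) * ((m / k' : ℕ):ℝ) ≤ (m:ℝ) := by
      have : k' * (m / k') ≤ m := by omega
      exact_mod_cast this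
    have hcast : (n (i+1) : ℝ) = (k:ℝ) * ((m / k' : ℕ):ℝ) := by
      rw [hrec]; push_cast; ring
    have hdivpos : (0:ℝ) ≤ (k:ℝ)/k' := le_of_lt (div_pos hkR hk'R)
    refine ⟨?_, ?_, hlb i⟩
    · rw [hcast]
      have hmm := mul_le_mul_of_nonneg_left h1.le hdivpos
      have hx : (k:ℝ)/k' * ((k':ℝ) * ((m/k' : ℕ):ℝ) + k') = (k:ℝ) * ((m/k' : ℕ):ℝ) + k := by
        field_simp
      linarith
    · rw [hcast]
      have hmm := mul_le_mul_of_nonneg_left h2 hdivpos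
      have hx : (k:ℝ)/k' * ((k':ℝ) * ((m/k' : ℕ):ℝ)) = (k:ℝ) * ((m/k' : ℕ):ℝ) := by
        field_simp
      linarith
  -- key exact identity
  have keyR : ∀ i, 1 ≤ i →
      (k':ℝ) * (n (i+1) : ℝ) + (k:ℝ) * (l i : ℝ) = (k:ℝ) * ((n i : ℝ) + (l (i-2) : ℝ)) := by
    intro i hi
    have hnat : k' * n (i+1) + k * l i = k * (n i + l (i-2)) := by
      rw [hn i hi, hl i hi]
      have hdm := Nat.div_add_mod (n i + l (i-2)) k'
      calc k' * (k * ((n i + l (i-2)) / k')) + k * ((n i + l (i-2)) % k')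
          = k * (k' * ((n i + l (i-2)) / k') + (n i + l (i-2)) % k') := by ring
        _ = k * (n i + l (i-2)) := by rw [hdm]
    exact_mod_cast hnat
  -- n i ≥ k for all i ≥ 1
  have hnk : ∀ i, 1 ≤ i → k ≤ n i := by
    intro i hi
    induction i, hi using Nat.le_induction with
    | base => exact le_of_eq hn1.symm
    | succ i hi ih =>
      rw [hn i hi]
      have h1 : 1 ≤ (n i + l (i-2)) / k' := by
        rw [Nat.one_le_div_iff hk'0]; omega
      calc k = k * 1 := (mul_one k).symm
        _ ≤ k * ((n i + l (i-2)) / k') := Nat.mul_le_mul_left k h1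
  -- mass recurrence
  have hMrec : ∀ i, 1 ≤ i →
      (k:ℝ) * auxM13 n l (i+1) = (k:ℝ) * auxM13 n l i + ((k:ℝ) - k') * (n (i+1) : ℝ) := by
    intro i hi
    have h := keyR i hi
    have e1 : (i+1) - 1 = i := by omega
    have e2 : (i+1) - 2 = i - 1 := by omega
    simp only [auxM13, e1, e2]
    linear_combination h
  -- mass increases by at least 1 each step
  have hMmono : ∀ i, 1 ≤ i → auxM13 n l i + 1 ≤ auxM13 n l (i+1) := by
    intro i hi
    have h := hMrec i hi
    have hn' : (k:ℝ) ≤ (n (i+1) : ℝ) := by exact_mod_cast hnk (i+1) (by omega)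
    have hd : (1:ℝ) ≤ (k:ℝ) - k' := by
      have : (k':ℝ) + 1 ≤ k := by exact_mod_cast hkk
      linarith
    have hp : (k:ℝ) ≤ ((k:ℝ) - k') * (n (i+1) : ℝ) := by
      calc (k:ℝ) = 1 * k := (one_mul _).symm
        _ ≤ ((k:ℝ) - k') * (n (i+1) : ℝ) := mul_le_mul hd hn' hkR.le (by linarith)
    have hh : (k:ℝ) * (auxM13 n l i + 1) ≤ (k:ℝ) * auxM13 n l (i+1) := by
      rw [mul_add, mul_one]; linarith
    exact le_of_mul_le_mul_left hh hkR
  -- mass grows at least linearly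
  have hMi : ∀ i : ℕ, 1 ≤ i → ((i : ℕ) : ℝ) ≤ auxM13 n l i := by
    intro i hi
    induction i, hi using Nat.le_induction with
    | base =>
      have h1 : auxM13 n l 1 = (k:ℝ) := by simp [auxM13, hn1, hl0]
      rw [h1]
      have : (1:ℕ) ≤ k := hk0
      exact_mod_cast this
    | succ i hi ih =>
      have := hMmono i hi
      push_cast
      linarith
  -- n_{i+1} ≥ r * (M_i - 2k')
  have hNlow : ∀ i, 1 ≤ i →
      (k:ℝ) * (auxM13 n l i - 2*(k':ℝ)) ≤ (k':ℝ) * (n (i+1) : ℝ) := by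
    intro i hi
    have h := keyR i hi
    have h1 : (l (i-1) : ℝ) ≤ (k':ℝ) := le_of_lt (by exact_mod_cast hlb (i-1))
    have h2 : (l i : ℝ) ≤ (k':ℝ) := le_of_lt (by exact_mod_cast hlb i)
    have h3 : (0:ℝ) ≤ (k:ℝ) * (2*(k':ℝ) - (l i : ℝ) - (l (i-1) : ℝ)) :=
      mul_nonneg hkR.le (by linarith)
    simp only [auxM13]
    nlinarith [h, h3]
  -- geometric growth of M - 2k' from index 2k'+1 on
  have geo : ∀ j : ℕ, r ^ j ≤ auxM13 n l (2*k'+1+j) - 2*(k':ℝ) := by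
    intro j
    induction j with
    | zero =>
      have h := hMi (2*k'+1) (by omega)
      have hc : ((2*k'+1 : ℕ):ℝ) = 2*(k':ℝ)+1 := by push_cast; ring
      rw [hc] at h
      simpa using (by linarith : (1:ℝ) ≤ auxM13 n l (2*k'+1) - 2*(k':ℝ))
    | succ j ih =>
      have hi : 1 ≤ 2*k'+1+j := by omega
      have h1 := hNlow (2*k'+1+j) hi
      have h2 := hMrec (2*k'+1+j) hi
      have hmul : ((k:ℝ)-k') * ((k:ℝ) * (auxM13 n l (2*k'+1+j) - 2*(k':ℝ)))
          ≤ ((k:ℝ)-k') * ((k':ℝ) * (n (2*k'+1+j+1) : ℝ)) :=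
        mul_le_mul_of_nonneg_left h1 hsub.le
      have hmul2 : (k':ℝ) * ((k:ℝ) * auxM13 n l (2*k'+1+j+1))
          = (k':ℝ) * ((k:ℝ) * auxM13 n l (2*k'+1+j) + ((k:ℝ) - k') * (n (2*k'+1+j+1) : ℝ)) := by
        rw [h2]
      have h3 : (k:ℝ) * ((k:ℝ) * (auxM13 n l (2*k'+1+j) - 2*(k':ℝ)))
          ≤ (k:ℝ) * ((k':ℝ) * (auxM13 n l (2*k'+1+j+1) - 2*(k':ℝ))) := by
        nlinarith [hmul, hmul2]
      have h4 : (k:ℝ) * (auxM13 n l (2*k'+1+j) - 2*(k':ℝ))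
          ≤ (k':ℝ) * (auxM13 n l (2*k'+1+j+1) - 2*(k':ℝ)) :=
        le_of_mul_le_mul_left h3 hkR
      have he : 2*k'+1+(j+1) = 2*k'+1+j+1 := by omega
      rw [he, pow_succ]
      have h5 : r ^ j * r ≤ (auxM13 n l (2*k'+1+j) - 2*(k':ℝ)) * r :=
        mul_le_mul_of_nonneg_right ih hr0.le
      have h6 : (auxM13 n l (2*k'+1+j) - 2*(k':ℝ)) * r
          ≤ auxM13 n l (2*k'+1+j+1) - 2*(k':ℝ) := by
        rw [hr, ← mul_div_assoc, div_le_iff₀ hk'R]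
        nlinarith [h4]
      linarith
  -- geometric lower bound on n
  have hNgeo : ∀ j : ℕ, r ^ j ≤ (n (2*k'+1+j) : ℝ) := by
    intro j
    match j with
    | 0 =>
      simp only [pow_zero, Nat.add_zero]
      have h := hnk (2*k'+1) (by omega)
      have : (1:ℝ) ≤ (k:ℝ) := by exact_mod_cast hk0
      have h2 : (k:ℝ) ≤ (n (2*k'+1) : ℝ) := by exact_mod_cast h
      linarith
    | (j+1) =>
      have hg := geo j
      have h1 := hNlow (2*k'+1+j) (by omega)
      have h2 : (k:ℝ) * (r^j) ≤ (k:ℝ) * (auxM13 n l (2*k'+1+j) - 2*(k':ℝ)) :=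
        mul_le_mul_of_nonneg_left hg hkR.le
      have h3 : r^(j+1) * (k':ℝ) = (k:ℝ) * r^j := by
        rw [pow_succ]
        linear_combination (r^j) * hrk
      have he : 2*k'+1+(j+1) = 2*k'+1+j+1 := by omega
      rw [he]
      have h4 : r^(j+1) * (k':ℝ) ≤ (n (2*k'+1+j+1) : ℝ) * (k':ℝ) := by
        rw [h3]; nlinarith [h1, h2]
      exact le_of_mul_le_mul_right h4 hk'R
  -- upper bound
  have hA0 : (0:ℝ) < (k:ℝ)*(k':ℝ)/((k:ℝ)-k') := div_pos (mul_pos hkR hk'R) hsub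
  have hAk : r * ((k:ℝ)*(k':ℝ)/((k:ℝ)-k') - k') = (k:ℝ)*(k':ℝ)/((k:ℝ)-k') := by
    rw [hr]; field_simp; ring
  have upper : ∀ i, 1 ≤ i →
      (n i : ℝ) ≤ (k:ℝ)*(k':ℝ)/((k:ℝ)-k') * r^i - (k:ℝ)*(k':ℝ)/((k:ℝ)-k') := by
    intro i hi
    induction i, hi using Nat.le_induction with
    | base =>
      have : (k:ℝ)*(k':ℝ)/((k:ℝ)-k') * r^1 - (k:ℝ)*(k':ℝ)/((k:ℝ)-k') = (k:ℝ) := by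
        rw [pow_one, hr]; field_simp
      rw [this, hn1]
    | succ i hi ih =>
      have hup := (part1 i hi).2.1
      push_cast at hup
      have hl2 : (l (i-2) : ℝ) ≤ (k':ℝ) := le_of_lt (by exact_mod_cast hlb (i-2))
      calc (n (i+1) : ℝ) ≤ (k:ℝ)/k' * ((n i : ℝ) + (l (i-2) : ℝ)) := hup
        _ = r * ((n i : ℝ) + (l (i-2) : ℝ)) := by rw [hr]
        _ ≤ r * ((k:ℝ)*(k':ℝ)/((k:ℝ)-k') * r^i - (k:ℝ)*(k':ℝ)/((k:ℝ)-k') + k') := by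
            apply mul_le_mul_of_nonneg_left _ hr0.le
            linarith
        _ = (k:ℝ)*(k':ℝ)/((k:ℝ)-k') * r^(i+1) - (k:ℝ)*(k':ℝ)/((k:ℝ)-k') := by
            linear_combination (-1 : ℝ) * hAk
  refine ⟨part1, 1/r^(2*k'+1), (k:ℝ)*(k':ℝ)/((k:ℝ)-k'),
    div_pos one_pos (pow_pos hr0 _), hA0, ?_⟩
  intro i hi
  constructor
  · rcases le_or_gt i (2*k'+1) with hle | hgt
    · have h1 : r^i ≤ r^(2*k'+1) := pow_le_pow_right₀ hr1.le hle
      have h2 : (1:ℝ) ≤ (n i : ℝ) := by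
        have := hnk i hi
        exact_mod_cast (by omega : 1 ≤ n i)
      have h3 : 1/r^(2*k'+1) * r^i ≤ 1 := by
        rw [div_mul_eq_mul_div, one_mul, div_le_one (pow_pos hr0 _)]
        exact h1
      linarith
    · obtain ⟨j, rfl⟩ : ∃ j, i = 2*k'+1+j := ⟨i - (2*k'+1), by omega⟩
      have hg := hNgeo j
      have he : 1/r^(2*k'+1) * r^(2*k'+1+j) = r^j := by
        rw [one_div, pow_add r (2*k'+1) j, inv_mul_cancel_left₀ (pow_ne_zero _ (ne_of_gt hr0))]
      rw [he]
      exact hg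
  · have h := upper i hi
    linarith
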